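/- For the path graph P_n on n vertices, the burning number satisfies b(P_n) = ⌈√n⌉. -/

import Mathlib

open SimpleGraph

/-- The closed ball of radius `r` around `v` in the graph metric
(restricted to the connected component of `v`). -/
def SimpleGraph.nball {V : Type*} (G : SimpleGraph V) (v : V) (r : ℕ) : Set V :=
  {u | G.Reachable v u ∧ G.dist v u ≤ r}

/-- `G` can be burned in `M` rounds: its vertices can be covered by closed balls
of radii `M-1, M-2, ..., 0` around some vertices. -/
def SimpleGraph.burnsIn {V : Type*} (G : SimpleGraph V) (M : ℕ) : Prop :=
  ∃ f : Fin M → V, ∀ u : V, ∃ i : Fin M, u ∈ G.nball (f i) (M - 1 - (i : ℕ))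

/-- The burning number of `G`. -/
noncomputable def SimpleGraph.burningNumber {V : Type*} (G : SimpleGraph V) : ℕ :=
  sInf {M | G.burnsIn M}

lemma pg_walk_exists {n : ℕ} (d : ℕ) : ∀ (i j : Fin n), j.val = i.val + d →
    ∃ w : (pathGraph n).Walk i j, w.length = d := by
  induction d with
  | zero =>
    intro i j h
    have : i = j := Fin.ext h.symm
    subst this
    exact ⟨Walk.nil, rfl⟩
  | succ d ih =>
    intro i j h
    have hlt : i.val + 1 < n := lt_of_le_of_lt (by omega) j.isLt
    set i' : Fin n := ⟨i.val + 1, hlt⟩ with hi'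
    have hadj : (pathGraph n).Adj i i' := pathGraph_adj.mpr (Or.inl rfl)
    obtain ⟨w, hw⟩ := ih i' j (by simp [hi']; omega)
    exact ⟨Walk.cons hadj w, by simp [hw]⟩

lemma pg_reachable {n : ℕ} (i j : Fin n) : (pathGraph n).Reachable i j := by
  rcases le_total i.val j.val with h | h
  · obtain ⟨w, _⟩ := pg_walk_exists (j.val - i.val) i j (by omega); exact w.reachable
  · obtain ⟨w, _⟩ := pg_walk_exists (i.val - j.val) j i (by omega); exact w.reachable.symm

lemma pg_dist_le {n : ℕ} (i j : Fin n) : (pathGraph n).dist i j ≤ Nat.dist i.val j.val := by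
  rcases le_total i.val j.val with h | h
  · obtain ⟨w, hw⟩ := pg_walk_exists (j.val - i.val) i j (by omega)
    calc (pathGraph n).dist i j ≤ w.length := SimpleGraph.dist_le w
    _ = Nat.dist i.val j.val := by rw [hw, Nat.dist_eq_sub_of_le h]
  · obtain ⟨w, hw⟩ := pg_walk_exists (i.val - j.val) j i (by omega)
    calc (pathGraph n).dist i j ≤ w.reverse.length := SimpleGraph.dist_le _
    _ = Nat.dist i.val j.val := by
        rw [Walk.length_reverse, hw, Nat.dist_eq_sub_of_le_right h]

lemma pg_walk_ge {n : ℕ} {i j : Fin n} (w : (pathGraph n).Walk i j) :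
    Nat.dist i.val j.val ≤ w.length := by
  induction w with
  | nil => simp [Nat.dist_self]
  | @cons a b c hadj w ih =>
    have h1 : Nat.dist a.val b.val = 1 := by
      rcases pathGraph_adj.mp hadj with h | h <;> simp [Nat.dist] <;> omega
    calc Nat.dist a.val c.val ≤ Nat.dist a.val b.val + Nat.dist b.val c.val :=
          Nat.dist.triangle_inequality _ _ _
    _ ≤ 1 + w.length := by rw [h1]; omega
    _ = (Walk.cons hadj w).length := by simp [Nat.add_comm]

lemma pg_dist {n : ℕ} (i j : Fin n) : (pathGraph n).dist i j = Nat.dist i.val j.val := by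
  refine le_antisymm (pg_dist_le i j) ?_
  obtain ⟨w, hw⟩ := (pg_reachable i j).exists_walk_length_eq_dist
  calc Nat.dist i.val j.val ≤ w.length := pg_walk_ge w
  _ = _ := hw

lemma pg_mem_nball {n : ℕ} (v u : Fin n) (r : ℕ) :
    u ∈ (pathGraph n).nball v r ↔ Nat.dist v.val u.val ≤ r := by
  simp [SimpleGraph.nball, pg_reachable, pg_dist]

lemma ceil_sqrt_le_iff (n M : ℕ) : ⌈Real.sqrt n⌉₊ ≤ M ↔ n ≤ M * M := by
  rw [Nat.ceil_le, Real.sqrt_le_left (Nat.cast_nonneg M),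
    show ((M : ℝ)) ^ 2 = ((M * M : ℕ) : ℝ) by push_cast; ring, Nat.cast_le]

lemma sum_odds (M : ℕ) : ∑ i ∈ Finset.range M, (2 * i + 1) = M * M := by
  induction M with
  | zero => simp
  | succ M ih => rw [Finset.sum_range_succ, ih]; ring

lemma pg_burnsIn_imp {n M : ℕ} (h : (pathGraph n).burnsIn M) : n ≤ M * M := by
  obtain ⟨f, hf⟩ := h
  have hcover : (Finset.univ : Finset (Fin n)) ⊆
      Finset.univ.biUnion (fun i : Fin M =>
        Finset.univ.filter (fun u : Fin n => Nat.dist (f i).val u.val ≤ M - 1 - i.val)) := by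
    intro u _
    obtain ⟨i, hi⟩ := hf u
    rw [pg_mem_nball] at hi
    exact Finset.mem_biUnion.mpr ⟨i, Finset.mem_univ _, by simpa using hi⟩
  have hcard : ∀ i : Fin M,
      (Finset.univ.filter (fun u : Fin n => Nat.dist (f i).val u.val ≤ M - 1 - i.val)).card
        ≤ 2 * (M - 1 - i.val) + 1 := by
    intro i
    set r := M - 1 - i.val
    set c := (f i).val
    calc (Finset.univ.filter (fun u : Fin n => Nat.dist c u.val ≤ r)).card
        ≤ (Finset.range (2 * r + 1)).card := by
          apply Finset.card_le_card_of_injOn (fun u => u.val + r - c)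
          · intro u hu
            have hu : c - u.val + (u.val - c) ≤ r := (Finset.mem_filter.mp hu).2
            simp only [Finset.mem_coe, Finset.mem_range]
            omega
          · intro u1 h1 u2 h2 he
            have h1 : c - u1.val + (u1.val - c) ≤ r := (Finset.mem_filter.mp h1).2
            have h2 : c - u2.val + (u2.val - c) ≤ r := (Finset.mem_filter.mp h2).2
            have he' : u1.val + r - c = u2.val + r - c := he
            exact Fin.ext (by omega)
      _ = 2 * r + 1 := Finset.card_range _
  calc n = (Finset.univ : Finset (Fin n)).card := (Finset.card_fin n).symm
    _ ≤ _ := Finset.card_le_card hcover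
    _ ≤ ∑ i : Fin M, (2 * (M - 1 - i.val) + 1) :=
        (Finset.card_biUnion_le).trans (Finset.sum_le_sum fun i _ => hcard i)
    _ = ∑ i ∈ Finset.range M, (2 * (M - 1 - i) + 1) := Fin.sum_univ_eq_sum_range (fun i => 2 * (M - 1 - i) + 1) M
    _ = ∑ i ∈ Finset.range M, (2 * i + 1) := Finset.sum_range_reflect (fun i => 2 * i + 1) M
    _ = M * M := sum_odds M

lemma pg_burnsIn {n : ℕ} (hn : 1 ≤ n) {M : ℕ} (hM1 : 1 ≤ M) (hM2 : n ≤ M * M) :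
    (pathGraph n).burnsIn M := by
  refine ⟨fun i => ⟨min (M * M - (M - i.val) * (M - i.val) + (M - 1 - i.val)) (n - 1),
    by omega⟩, fun u => ?_⟩
  set t := M * M - 1 - u.val with ht
  set s := Nat.sqrt t with hs
  have hs1 : s * s ≤ t := by simpa [pow_two] using Nat.sqrt_le' t
  have hs2 : t < (s + 1) * (s + 1) := by simpa [pow_two, Nat.succ_eq_add_one] using Nat.lt_succ_sqrt' t
  have hsM : s + 1 ≤ M := by
    by_contra hc
    push_neg at hc
    have : M * M ≤ s * s := Nat.mul_le_mul (by omega) (by omega)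
    have := u.isLt
    omega
  refine ⟨⟨M - 1 - s, by omega⟩, ?_⟩
  rw [pg_mem_nball]
  have h1 : M - (M - 1 - s) = s + 1 := by omega
  have h2 : M - 1 - (M - 1 - s) = s := by omega
  simp only [h1, h2]
  have hsq : (s + 1) * (s + 1) = s * s + s + s + 1 := by ring
  have hu := u.isLt
  simp only [Nat.dist]
  omega

/-- The burning number of the path on `n` vertices is `⌈√n⌉`. -/
theorem burningNumber_pathGraph (n : ℕ) :
    (SimpleGraph.pathGraph n).burningNumber = ⌈Real.sqrt n⌉₊ := by
  rcases Nat.eq_zero_or_pos n with hn | hn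
  · subst hn
    have h0 : (pathGraph 0).burnsIn 0 := ⟨Fin.elim0, fun u => u.elim0⟩
    have : ⌈Real.sqrt ((0 : ℕ) : ℝ)⌉₊ = 0 := by simp
    rw [this]
    exact Nat.sInf_eq_zero.mpr (Or.inl h0)
  · set M := ⌈Real.sqrt n⌉₊ with hM
    have hM2 : n ≤ M * M := (ceil_sqrt_le_iff n M).mp le_rfl
    have hM1 : 1 ≤ M := by
      rcases Nat.eq_zero_or_pos M with h | h
      · rw [h] at hM2; omega
      · exact h
    have hb : (pathGraph n).burnsIn M := pg_burnsIn hn hM1 hM2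
    refine le_antisymm (Nat.sInf_le hb) (le_csInf ⟨M, hb⟩ ?_)
    intro K hK
    exact (ceil_sqrt_le_iff n K).mpr (pg_burnsIn_imp hK)
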